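/- Let G be a finite abelian group with Fourier transform normalized so that f̂(χ) = |G|^{-1/2} ∑_{x∈G} f(x) conj(χ(x)) (so that Plancherel holds with constant 1). Let S ⊆ G and Σ ⊆ Ĝ, and suppose Σ satisfies a (p,q)-restriction estimate with constant ρ, i.e. ‖(1_S f)^‖_{ℓ^q(Σ)} ≤ ρ ‖1_S f‖_{ℓ^p(G)} for all f, where 1 ≤ p ≤ 2 ≤ q. If ρ · |S|^{1/p − 1/2} · |Σ|^{1/2 − 1/q} < 1, then for every f : G → ℂ, ‖f‖_{ℓ²(G)} ≤ (1 − ρ |S|^{1/p−1/2} |Σ|^{1/2−1/q})^{-1} (‖f‖_{ℓ²(G∖S)} + ‖f̂‖_{ℓ²(Ĝ∖Σ)}). -/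

import Mathlib

open Finset ComplexConjugate

/-- ℓ²-norm of `f` over the finite set `T`. -/
noncomputable def l2norm {α : Type*} (T : Finset α) (f : α → ℂ) : ℝ :=
  Real.sqrt (∑ x ∈ T, ‖f x‖ ^ 2)

/-- ℓ^p-norm (p a real exponent) of `f` over the finite set `T`. -/
noncomputable def lpnorm {α : Type*} (p : ℝ) (T : Finset α) (f : α → ℂ) : ℝ :=
  (∑ x ∈ T, ‖f x‖ ^ p) ^ (1 / p)

/-- The unitary Fourier transform on a finite abelian group:
`f̂(χ) = |G|^{-1/2} ∑_x f x * conj (χ x)`. -/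
noncomputable def dft {G : Type*} [AddCommGroup G] [Fintype G]
    (f : G → ℂ) (χ : AddChar G ℂ) : ℂ :=
  (Real.sqrt (Fintype.card G) : ℂ)⁻¹ * ∑ x, f x * conj (χ x)

/-! ### Auxiliary lemmas -/

lemma l2norm_nonneg {α : Type*} (T : Finset α) (f : α → ℂ) : 0 ≤ l2norm T f :=
  Real.sqrt_nonneg _

lemma plancherel {G : Type} [AddCommGroup G] [Fintype G] [DecidableEq G] (f : G → ℂ) :
    ∑ χ : AddChar G ℂ, ‖dft f χ‖ ^ 2 = ∑ x, ‖f x‖ ^ 2 := by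
  have hc : (0:ℝ) < Fintype.card G := by positivity
  have key : ∑ χ : AddChar G ℂ, dft f χ * conj (dft f χ)
      = ∑ x, f x * conj (f x) := by
    have h1 : ∀ χ : AddChar G ℂ, dft f χ * conj (dft f χ)
        = ((Fintype.card G : ℂ))⁻¹ * ∑ x, ∑ y, f x * conj (f y) * χ (y - x) := by
      intro χ
      rw [dft]
      rw [map_mul, map_inv₀, Complex.conj_ofReal, map_sum]
      rw [mul_mul_mul_comm]
      congr 1
      · rw [← mul_inv, ← Complex.ofReal_mul, Real.mul_self_sqrt hc.le]
        push_cast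
        ring
      · rw [Finset.sum_mul_sum]
        refine Finset.sum_congr rfl fun x _ => Finset.sum_congr rfl fun y _ => ?_
        rw [map_mul, Complex.conj_conj]
        have : χ (y - x) = conj (χ x) * χ y := by
          rw [sub_eq_add_neg, AddChar.map_add_eq_mul, AddChar.map_neg_eq_conj, mul_comm]
        rw [this]; ring
    simp_rw [h1, ← Finset.mul_sum]
    rw [Finset.sum_comm]
    have h2 : ∀ x : G, ∑ χ : AddChar G ℂ, ∑ y, f x * conj (f y) * χ (y - x)
        = (Fintype.card G : ℂ) * (f x * conj (f x)) := by
      intro x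
      rw [Finset.sum_comm]
      simp_rw [← Finset.mul_sum, AddChar.sum_apply_eq_ite]
      rw [Finset.sum_eq_single x]
      · simp [mul_comm]
      · intro y _ hy; simp [sub_eq_zero, hy]
      · simp
    simp_rw [h2, ← Finset.mul_sum, ← mul_assoc]
    rw [inv_mul_cancel₀ (by exact_mod_cast hc.ne'), one_mul]
  have h3 : ∀ z : ℂ, z * conj z = (‖z‖ ^ 2 : ℝ) := by
    intro z
    rw [Complex.mul_conj, Complex.normSq_eq_norm_sq]
  simp_rw [h3] at key
  exact_mod_cast congrArg Complex.re key

lemma power_mean {ι : Type*} (s : Finset ι) (a : ι → ℝ) (ha : ∀ i ∈ s, 0 ≤ a i)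
    {r t : ℝ} (hr : 0 < r) (hrt : r ≤ t) :
    (∑ i ∈ s, a i ^ r) ^ (1/r) ≤ (s.card : ℝ) ^ (1/r - 1/t) * (∑ i ∈ s, a i ^ t) ^ (1/t) := by
  have ht : 0 < t := hr.trans_le hrt
  rcases s.eq_empty_or_nonempty with hs | hs
  · simp only [hs, Finset.sum_empty, Finset.card_empty, Nat.cast_zero]
    rw [Real.zero_rpow (by positivity : (1/r) ≠ 0), Real.zero_rpow (by positivity : (1/t) ≠ 0),
      mul_zero]
  · have hn : (0:ℝ) < s.card := by exact_mod_cast hs.card_pos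
    set n : ℝ := (s.card : ℝ)
    have hA : (0:ℝ) ≤ ∑ i ∈ s, a i ^ r := Finset.sum_nonneg fun i hi => Real.rpow_nonneg (ha i hi) _
    have hB : (0:ℝ) ≤ ∑ i ∈ s, a i ^ t := Finset.sum_nonneg fun i hi => Real.rpow_nonneg (ha i hi) _
    have key := Real.rpow_arith_mean_le_arith_mean_rpow s (fun _ => n⁻¹) (fun i => a i ^ r)
      (fun i _ => by positivity) (by simp [Finset.sum_const, n]; field_simp)
      (fun i hi => Real.rpow_nonneg (ha i hi) _) (p := t/r) ((one_le_div hr).2 hrt)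
    have hz : ∀ i ∈ s, (a i ^ r) ^ (t/r) = a i ^ t := by
      intro i hi
      rw [← Real.rpow_mul (ha i hi)]
      congr 1
      field_simp
    have key' : (n⁻¹ * ∑ i ∈ s, a i ^ r) ^ (t/r) ≤ n⁻¹ * ∑ i ∈ s, a i ^ t := by
      calc (n⁻¹ * ∑ i ∈ s, a i ^ r) ^ (t/r) = (∑ x ∈ s, n⁻¹ * a x ^ r) ^ (t/r) := by
            rw [Finset.mul_sum]
        _ ≤ ∑ x ∈ s, n⁻¹ * (a x ^ r) ^ (t/r) := key
        _ = n⁻¹ * ∑ i ∈ s, a i ^ t := by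
            rw [Finset.sum_congr rfl fun i hi => by rw [hz i hi], Finset.mul_sum]
    set A := ∑ i ∈ s, a i ^ r with hAdef
    set B := ∑ i ∈ s, a i ^ t with hBdef
    calc A ^ (1/r)
        = n ^ (1/r) * (n⁻¹ ^ (1/r) * A ^ (1/r)) := by
          rw [← mul_assoc, ← Real.mul_rpow hn.le (by positivity), mul_inv_cancel₀ hn.ne',
            Real.one_rpow, one_mul]
      _ ≤ n ^ (1/r) * (n⁻¹ ^ (1/t) * B ^ (1/t)) := by
          refine mul_le_mul_of_nonneg_left ?_ (by positivity)
          rw [← Real.mul_rpow (by positivity) hA, ← Real.mul_rpow (by positivity) hB]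
          calc (n⁻¹ * A) ^ (1/r) = ((n⁻¹ * A) ^ (t/r)) ^ (1/t) := by
                rw [← Real.rpow_mul (by positivity)]
                congr 1
                field_simp
            _ ≤ (n⁻¹ * B) ^ (1/t) := Real.rpow_le_rpow (by positivity) key' (by positivity)
      _ = n ^ (1/r - 1/t) * B ^ (1/t) := by
          rw [Real.rpow_sub hn, Real.inv_rpow hn.le]
          ring

lemma l2norm_add_le {α : Type*} (T : Finset α) (u v : α → ℂ) :
    l2norm T (fun x => u x + v x) ≤ l2norm T u + l2norm T v := by
  set a : EuclideanSpace ℂ ↥T := WithLp.toLp 2 (fun i => u i) with ha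
  set b : EuclideanSpace ℂ ↥T := WithLp.toLp 2 (fun i => v i) with hb
  have norm_eq : ∀ w : α → ℂ, ‖(show EuclideanSpace ℂ ↥T from WithLp.toLp 2 (fun i => w i))‖ = l2norm T w := by
    intro w
    rw [EuclideanSpace.norm_eq, l2norm]
    congr 1
    exact Finset.sum_coe_sort T (fun x => ‖w x‖ ^ 2)
  have hab : ‖a + b‖ = l2norm T (fun x => u x + v x) := by
    rw [EuclideanSpace.norm_eq, l2norm, ← Finset.sum_coe_sort T (fun x => ‖u x + v x‖ ^ 2)]
    congr 1
  have e := norm_add_le a b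
  rw [hab, ha, hb, norm_eq u, norm_eq v] at e
  exact e

lemma l2norm_mono {α : Type*} {T T' : Finset α} (h : T ⊆ T') (f : α → ℂ) :
    l2norm T f ≤ l2norm T' f :=
  Real.sqrt_le_sqrt (Finset.sum_le_sum_of_subset_of_nonneg h fun _ _ _ => by positivity)

lemma sqrt_add_le {a b : ℝ} (ha : 0 ≤ a) (hb : 0 ≤ b) :
    Real.sqrt (a + b) ≤ Real.sqrt a + Real.sqrt b := by
  have h1 := Real.sq_sqrt ha
  have h2 := Real.sq_sqrt hb
  have h3 := Real.sqrt_nonneg a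
  have h4 := Real.sqrt_nonneg b
  calc Real.sqrt (a + b) ≤ Real.sqrt ((Real.sqrt a + Real.sqrt b) ^ 2) :=
        Real.sqrt_le_sqrt (by nlinarith)
    _ = Real.sqrt a + Real.sqrt b := Real.sqrt_sq (by positivity)

lemma l2norm_split {α : Type*} [Fintype α] [DecidableEq α] (T : Finset α) (f : α → ℂ) :
    l2norm Finset.univ f ≤ l2norm T f + l2norm Tᶜ f := by
  rw [l2norm, ← Finset.sum_add_sum_compl T (fun x => ‖f x‖ ^ 2)]
  exact sqrt_add_le (by positivity) (by positivity)

/-- If `Σ` satisfies a `(p,q)`-restriction estimate with constant `ρ`,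
`1 ≤ p ≤ 2 ≤ q`, and `ρ |S|^{1/p-1/2} |Σ|^{1/2-1/q} < 1`, then `(S,Σ)` is a strong
annihilating pair with constant `(1 - ρ |S|^{1/p-1/2} |Σ|^{1/2-1/q})⁻¹`. -/
theorem stmt0 {G : Type} [AddCommGroup G] [Fintype G] [DecidableEq G]
    (S : Finset G) (Sig : Finset (AddChar G ℂ))
    (p q ρ : ℝ) (hp : 1 ≤ p) (hp2 : p ≤ 2) (hq : 2 ≤ q) (hρ : 0 ≤ ρ)
    (hrest : ∀ f : G → ℂ,
      lpnorm q Sig (dft (fun x => if x ∈ S then f x else 0))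
        ≤ ρ * lpnorm p Finset.univ (fun x => if x ∈ S then f x else 0))
    (hsmall : ρ * (S.card : ℝ) ^ (1 / p - 1 / 2) * (Sig.card : ℝ) ^ (1 / 2 - 1 / q) < 1) :
    ∀ f : G → ℂ,
      l2norm Finset.univ f ≤
        (1 - ρ * (S.card : ℝ) ^ (1 / p - 1 / 2) * (Sig.card : ℝ) ^ (1 / 2 - 1 / q))⁻¹ *
          (l2norm Sᶜ f + l2norm Sigᶜ (dft f)) := by
  intro f
  have hrg := hrest f
  set ε : ℝ := ρ * (S.card : ℝ) ^ (1 / p - 1 / 2) * (Sig.card : ℝ) ^ (1 / 2 - 1 / q) with hε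
  have hε0 : 0 ≤ ε := by positivity
  set g : G → ℂ := fun x => if x ∈ S then f x else 0 with hg
  have hp0 : 0 < p := by linarith
  have hq0 : 0 < q := by linarith
  set h : G → ℂ := fun x => if x ∈ S then 0 else f x with hh
  -- dft f = dft g + dft h pointwise
  have hdft : ∀ χ, dft f χ = dft g χ + dft h χ := by
    intro χ
    simp only [dft, hg, hh, ← mul_add, ← Finset.sum_add_distrib]
    congr 1
    refine Finset.sum_congr rfl fun x _ => ?_
    by_cases hx : x ∈ S <;> simp [hx]
  -- Plancherel in l2norm form
  have hplan : ∀ u : G → ℂ, l2norm Finset.univ (dft u) = l2norm Finset.univ u := by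
    intro u
    rw [l2norm, l2norm, plancherel]
  have hhf : l2norm Finset.univ h = l2norm Sᶜ f := by
    rw [l2norm, l2norm, ← Finset.sum_add_sum_compl S (fun x => ‖h x‖ ^ 2)]
    have e1 : ∑ x ∈ S, ‖h x‖ ^ 2 = 0 := Finset.sum_eq_zero fun x hx => by simp [hh, hx]
    have e2 : ∑ x ∈ Sᶜ, ‖h x‖ ^ 2 = ∑ x ∈ Sᶜ, ‖f x‖ ^ 2 :=
      Finset.sum_congr rfl fun x hx => by simp [hh, Finset.mem_compl.mp hx]
    rw [e1, e2, zero_add]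
  have hgf : l2norm Finset.univ g ≤ l2norm Finset.univ f := by
    apply Real.sqrt_le_sqrt
    refine Finset.sum_le_sum fun x _ => ?_
    gcongr
    by_cases hx : x ∈ S <;> simp [hg, hx]
  -- step 5 : restriction estimate chain
  have hl2rpow : ∀ (β : Type) (T : Finset β) (u : β → ℂ),
      l2norm T u = (∑ i ∈ T, ‖u i‖ ^ (2:ℝ)) ^ (1/(2:ℝ)) := by
    intro β T u
    rw [l2norm, Real.sqrt_eq_rpow]
    congr 1
    exact Finset.sum_congr rfl fun i _ => by
      rw [show ((2:ℝ) = ((2:ℕ):ℝ)) by norm_num, Real.rpow_natCast]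
  have step5 : l2norm Sig (dft g) ≤ ε * l2norm Finset.univ f := by
    have a1 : l2norm Sig (dft g)
        ≤ (Sig.card : ℝ) ^ (1/2 - 1/q) * lpnorm q Sig (dft g) := by
      rw [hl2rpow, lpnorm]
      exact power_mean Sig (fun χ => ‖dft g χ‖) (fun i _ => norm_nonneg _) two_pos hq
    have a3 : lpnorm p Finset.univ g ≤ (S.card : ℝ) ^ (1/p - 1/2) * l2norm Finset.univ g := by
      have e3 : ∑ x, ‖g x‖ ^ p = ∑ x ∈ S, ‖g x‖ ^ p := by
        refine (Finset.sum_subset (Finset.subset_univ S) fun x _ hx => ?_).symm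
        simp [hg, hx, Real.zero_rpow hp0.ne']
      have e4 : l2norm S g ≤ l2norm Finset.univ g := l2norm_mono (Finset.subset_univ S) g
      calc lpnorm p Finset.univ g = (∑ x ∈ S, ‖g x‖ ^ p) ^ (1/p) := by rw [lpnorm, e3]
        _ ≤ (S.card : ℝ) ^ (1/p - 1/2) * (∑ x ∈ S, ‖g x‖ ^ (2:ℝ)) ^ (1/(2:ℝ)) :=
            power_mean S (fun x => ‖g x‖) (fun i _ => norm_nonneg _) hp0 hp2
        _ = (S.card : ℝ) ^ (1/p - 1/2) * l2norm S g := by rw [hl2rpow]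
        _ ≤ (S.card : ℝ) ^ (1/p - 1/2) * l2norm Finset.univ g := by
            refine mul_le_mul_of_nonneg_left e4 (by positivity)
    calc l2norm Sig (dft g) ≤ (Sig.card : ℝ) ^ (1/2 - 1/q) * lpnorm q Sig (dft g) := a1
      _ ≤ (Sig.card : ℝ) ^ (1/2 - 1/q) * (ρ * lpnorm p Finset.univ g) := by
          refine mul_le_mul_of_nonneg_left hrg (by positivity)
      _ ≤ (Sig.card : ℝ) ^ (1/2 - 1/q) *
            (ρ * ((S.card : ℝ) ^ (1/p - 1/2) * l2norm Finset.univ g)) := by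
          refine mul_le_mul_of_nonneg_left (mul_le_mul_of_nonneg_left a3 hρ) (by positivity)
      _ ≤ (Sig.card : ℝ) ^ (1/2 - 1/q) *
            (ρ * ((S.card : ℝ) ^ (1/p - 1/2) * l2norm Finset.univ f)) := by
          refine mul_le_mul_of_nonneg_left (mul_le_mul_of_nonneg_left
            (mul_le_mul_of_nonneg_left hgf (by positivity)) hρ) (by positivity)
      _ = ε * l2norm Finset.univ f := by rw [hε]; ring
  have step3 : l2norm Sig (dft f) ≤ l2norm Sig (dft g) + l2norm Sig (dft h) := by
    have e5 : l2norm Sig (dft f) = l2norm Sig (fun χ => dft g χ + dft h χ) := by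
      rw [l2norm, l2norm]
      congr 1
      exact Finset.sum_congr rfl fun χ _ => by rw [hdft]
    rw [e5]
    exact l2norm_add_le Sig (dft g) (dft h)
  have step4 : l2norm Sig (dft h) ≤ l2norm Sᶜ f :=
    calc l2norm Sig (dft h) ≤ l2norm Finset.univ (dft h) :=
          l2norm_mono (Finset.subset_univ Sig) (dft h)
      _ = l2norm Finset.univ h := hplan h
      _ = l2norm Sᶜ f := hhf
  have main : l2norm Finset.univ f
      ≤ ε * l2norm Finset.univ f + (l2norm Sᶜ f + l2norm Sigᶜ (dft f)) := by
    have s1 : l2norm Finset.univ f = l2norm Finset.univ (dft f) := (hplan f).symm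
    have s2 : l2norm Finset.univ (dft f) ≤ l2norm Sig (dft f) + l2norm Sigᶜ (dft f) :=
      l2norm_split Sig (dft f)
    linarith
  have h1ε : 0 < 1 - ε := by linarith
  have hD : 0 ≤ l2norm Sᶜ f + l2norm Sigᶜ (dft f) :=
    add_nonneg (l2norm_nonneg _ _) (l2norm_nonneg _ _)
  calc l2norm Finset.univ f
      = (1 - ε)⁻¹ * (l2norm Finset.univ f * (1 - ε)) := by field_simp
    _ ≤ (1 - ε)⁻¹ * (l2norm Sᶜ f + l2norm Sigᶜ (dft f)) := by
        refine mul_le_mul_of_nonneg_left (by linarith) (by positivity)
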